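/- Let S = P_S ∪ L_S be a resolving set for a biaffine plane of order q. Then |P_S| ≥ q − |S|/(q−1) and |L_S| ≥ q − |S|/(q−1). -/

import Mathlib

open Set

/-- The bipartite point-line incidence graph of an incidence relation `I`. -/
def IncGraph {Pt Ln : Type*} (I : Pt → Ln → Prop) : SimpleGraph (Pt ⊕ Ln) where
  Adj x y := (∃ p l, x = Sum.inl p ∧ y = Sum.inr l ∧ I p l) ∨
             (∃ p l, x = Sum.inr l ∧ y = Sum.inl p ∧ I p l)
  symm := by
    constructor; rintro x y (⟨p, l, hx, hy, h⟩ | ⟨p, l, hx, hy, h⟩)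
    · exact Or.inr ⟨p, l, hy, hx, h⟩
    · exact Or.inl ⟨p, l, hy, hx, h⟩
  loopless := by
    constructor; rintro x (⟨p, l, hx, hy, h⟩ | ⟨p, l, hx, hy, h⟩) <;> subst hx <;> simp_all

/-- A set of vertices is a resolving set if every vertex is determined
by its distances to the elements of `S`. -/
def IsResolvingSet {V : Type*} (G : SimpleGraph V) (S : Set V) : Prop :=
  ∀ x y : V, (∀ s ∈ S, G.dist x s = G.dist y s) → x = y

/-- A biaffine plane of order `q` (an affine plane with one parallel class of lines
removed), together with its partition into `q` parallel classes of lines (given by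
`dir`, the direction) and `q` non-adjacency classes of points (given by `cls`):
`q²` points and `q²` lines, each point on `q` lines, each line with `q` points,
two points on at most one common line; two lines are in the same parallel class iff
they are equal or disjoint; two points are in the same non-adjacency class iff they
are equal or non-collinear; and for every non-incident point-line pair `(p, l)` there
is exactly one line through `p` missing `l` and exactly one point of `l` not
collinear with `p`. -/
def IsBiaffinePlane {Pt Ln : Type*} (q : ℕ) (I : Pt → Ln → Prop)
    (dir : Ln → Fin q) (cls : Pt → Fin q) : Prop :=
  Nat.card Pt = q ^ 2 ∧ Nat.card Ln = q ^ 2 ∧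
  (∀ l, {p | I p l}.ncard = q) ∧
  (∀ p, {l | I p l}.ncard = q) ∧
  (∀ p₁ p₂ : Pt, p₁ ≠ p₂ → {l | I p₁ l ∧ I p₂ l}.ncard ≤ 1) ∧
  (∀ l₁ l₂ : Ln, dir l₁ = dir l₂ ↔ (l₁ = l₂ ∨ ∀ p, ¬ (I p l₁ ∧ I p l₂))) ∧
  (∀ p₁ p₂ : Pt, cls p₁ = cls p₂ ↔ (p₁ = p₂ ∨ ∀ l, ¬ (I p₁ l ∧ I p₂ l))) ∧
  (∀ p l, ¬ I p l →
    (∃! l', I p l' ∧ ∀ p', ¬ (I p' l ∧ I p' l')) ∧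
    (∃! p', I p' l ∧ ∀ l', ¬ (I p l' ∧ I p' l')))

namespace BiaffineAux
open SimpleGraph Sum

variable {A B : Type*} {I : A → B → Prop}

lemma adj_inl_inr {p : A} {l : B} : (IncGraph I).Adj (inl p) (inr l) ↔ I p l := by
  constructor
  · rintro (⟨p', l', hp, hl, h⟩ | ⟨p', l', hp, hl, h⟩) <;> simp_all
  · intro h; exact Or.inl ⟨p, l, rfl, rfl, h⟩

lemma adj_inr_inl {p : A} {l : B} : (IncGraph I).Adj (inr l) (inl p) ↔ I p l := by
  rw [adj_comm]; exact adj_inl_inr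

lemma not_adj_inl_inl {p p' : A} : ¬ (IncGraph I).Adj (inl p) (inl p') := by
  rintro (⟨a, b, h1, h2, h⟩ | ⟨a, b, h1, h2, h⟩) <;> simp_all

lemma not_adj_inr_inr {l l' : B} : ¬ (IncGraph I).Adj (inr l) (inr l') := by
  rintro (⟨a, b, h1, h2, h⟩ | ⟨a, b, h1, h2, h⟩) <;> simp_all

lemma adj_isLeft {x y : A ⊕ B} (h : (IncGraph I).Adj x y) : y.isLeft = !x.isLeft := by
  rcases h with ⟨p, l, hx, hy, _⟩ | ⟨p, l, hx, hy, _⟩ <;> subst hx <;> subst hy <;> simp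

lemma walk_parity {x y : A ⊕ B} (w : (IncGraph I).Walk x y) :
    Even w.length ↔ (x.isLeft = y.isLeft) := by
  induction w with
  | nil => simp
  | cons h w ih =>
    have hb := adj_isLeft h
    rw [Walk.length_cons, Nat.even_add_one, ih, hb]
    have hb2 : ∀ b1 b2 : Bool, (¬(!b1) = b2 ↔ b1 = b2) := by decide
    exact hb2 _ _

lemma dist_eq_two {l₁ l₂ : B} {p : A} (hne : l₁ ≠ l₂) (h1 : I p l₁) (h2 : I p l₂) :
    (IncGraph I).dist (inr l₁) (inr l₂) = 2 := by
  obtain ⟨w, hwlen⟩ : ∃ w : (IncGraph I).Walk (inr l₁) (inr l₂), w.length = 2 :=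
    ⟨Walk.cons (adj_inr_inl.mpr h1) (Walk.cons (adj_inl_inr.mpr h2) Walk.nil), by simp⟩
  have hle : (IncGraph I).dist (inr l₁) (inr l₂) ≤ 2 := hwlen ▸ dist_le w
  have hne0 : (IncGraph I).dist (inr l₁) (inr l₂) ≠ 0 :=
    dist_ne_zero_iff_ne_and_reachable.mpr ⟨by simpa using hne, ⟨w⟩⟩
  obtain ⟨w', hw'⟩ := exists_walk_of_dist_ne_zero hne0
  have heven : Even ((IncGraph I).dist (inr l₁) (inr l₂)) := by
    rw [← hw']; exact (walk_parity w').mpr (by simp)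
  obtain ⟨k, hk⟩ := heven
  omega

lemma dist_eq_three {p : A} {l : B} (hnI : ¬ I p l) {p' : A} {l' : B}
    (h1 : I p l') (h2 : I p' l') (h3 : I p' l) :
    (IncGraph I).dist (inl p) (inr l) = 3 := by
  obtain ⟨w, hwlen⟩ : ∃ w : (IncGraph I).Walk (inl p) (inr l), w.length = 3 :=
    ⟨Walk.cons (adj_inl_inr.mpr h1) (Walk.cons (adj_inr_inl.mpr h2)
      (Walk.cons (adj_inl_inr.mpr h3) Walk.nil)), by simp⟩
  have hle : (IncGraph I).dist (inl p) (inr l) ≤ 3 := hwlen ▸ dist_le w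
  have hne0 : (IncGraph I).dist (inl p) (inr l) ≠ 0 :=
    dist_ne_zero_iff_ne_and_reachable.mpr ⟨by simp, ⟨w⟩⟩
  obtain ⟨w', hw'⟩ := exists_walk_of_dist_ne_zero hne0
  have hodd : ¬ Even ((IncGraph I).dist (inl p) (inr l)) := by
    rw [← hw']; rw [walk_parity w']; simp
  have hne1 : (IncGraph I).dist (inl p) (inr l) ≠ 1 := by
    intro h; exact hnI (adj_inl_inr.mp (dist_eq_one_iff_adj.mp h))
  rw [Nat.not_even_iff_odd] at hodd
  obtain ⟨k, hk⟩ := hodd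
  omega

lemma dist_eq_four {l₁ l₂ : B} (hne : l₁ ≠ l₂) (hdisj : ∀ a, ¬ (I a l₁ ∧ I a l₂))
    {p p' : A} {m : B} (h1 : I p l₁) (h2 : I p m) (h3 : I p' m) (h4 : I p' l₂) :
    (IncGraph I).dist (inr l₁) (inr l₂) = 4 := by
  obtain ⟨w, hwlen⟩ : ∃ w : (IncGraph I).Walk (inr l₁) (inr l₂), w.length = 4 :=
    ⟨Walk.cons (adj_inr_inl.mpr h1) (Walk.cons (adj_inl_inr.mpr h2)
      (Walk.cons (adj_inr_inl.mpr h3) (Walk.cons (adj_inl_inr.mpr h4) Walk.nil))), by simp⟩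
  have hle : (IncGraph I).dist (inr l₁) (inr l₂) ≤ 4 := hwlen ▸ dist_le w
  have hne0 : (IncGraph I).dist (inr l₁) (inr l₂) ≠ 0 :=
    dist_ne_zero_iff_ne_and_reachable.mpr ⟨by simpa using hne, ⟨w⟩⟩
  obtain ⟨w', hw'⟩ := exists_walk_of_dist_ne_zero hne0
  have heven : Even ((IncGraph I).dist (inr l₁) (inr l₂)) := by
    rw [← hw']; exact (walk_parity w').mpr (by simp)
  have hne2 : (IncGraph I).dist (inr l₁) (inr l₂) ≠ 2 := by
    intro h
    rw [h] at hw'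
    cases w' with
    | nil => simp at hw'
    | cons ha w'' =>
      rename_i b
      cases b with
      | inr l => exact not_adj_inr_inr ha
      | inl a =>
        have hlen : w''.length = 1 := by simpa using hw'
        have := Walk.adj_of_length_eq_one hlen
        exact hdisj a ⟨adj_inr_inl.mp ha, adj_inl_inr.mp this⟩
  obtain ⟨k, hk⟩ := heven
  omega

end BiaffineAux

namespace BiaffineAux
open SimpleGraph Sum

variable {A B : Type*} {I : A → B → Prop}

lemma dist_le_iso {V W : Type*} {G : SimpleGraph V} {G' : SimpleGraph W} (e : G ≃g G')
    (x y : V) : G'.dist (e x) (e y) ≤ G.dist x y := by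
  by_cases h : G.Reachable x y
  · obtain ⟨w, hw⟩ := h.exists_walk_length_eq_dist
    calc G'.dist (e x) (e y) ≤ (w.map e.toHom).length := dist_le _
    _ = w.length := by simp
    _ = _ := hw
  · rw [dist_eq_zero_of_not_reachable]
    · exact Nat.zero_le _
    · intro hr
      have := hr.map e.symm.toHom
      rw [show e.symm.toHom (e x) = x by simp, show e.symm.toHom (e y) = y by simp] at this
      exact h this

lemma dist_iso {V W : Type*} {G : SimpleGraph V} {G' : SimpleGraph W} (e : G ≃g G')
    (x y : V) : G'.dist (e x) (e y) = G.dist x y := by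
  refine le_antisymm (dist_le_iso e x y) ?_
  have := dist_le_iso e.symm (e x) (e y)
  simpa using this

def swapIso (I : A → B → Prop) : IncGraph (fun b a => I a b) ≃g IncGraph I where
  toEquiv := Equiv.sumComm B A
  map_rel_iff' := by
    intro x y
    cases x <;> cases y
    · exact iff_of_false not_adj_inr_inr not_adj_inl_inl
    · exact adj_inr_inl.trans (adj_inl_inr (I := fun b a => I a b)).symm
    · exact adj_inl_inr.trans (adj_inr_inl (I := fun b a => I a b)).symm
    · exact iff_of_false not_adj_inl_inl not_adj_inr_inr

lemma resolving_swap {PS : Set A} {LS : Set B}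
    (hres : IsResolvingSet (IncGraph I) (Sum.inl '' PS ∪ Sum.inr '' LS)) :
    IsResolvingSet (IncGraph (fun b a => I a b)) (Sum.inl '' LS ∪ Sum.inr '' PS) := by
  intro x y h
  have key : (swapIso I) x = (swapIso I) y := by
    apply hres
    rintro s (⟨a, ha, rfl⟩ | ⟨b, hb, rfl⟩)
    · have h1 : (Sum.inl a : A ⊕ B) = (swapIso I) (Sum.inr a) := rfl
      rw [h1, dist_iso, dist_iso]
      exact h (Sum.inr a) (Or.inr ⟨a, ha, rfl⟩)
    · have h1 : (Sum.inr b : A ⊕ B) = (swapIso I) (Sum.inl b) := rfl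
      rw [h1, dist_iso, dist_iso]
      exact h (Sum.inl b) (Or.inl ⟨b, hb, rfl⟩)
  exact (swapIso I).toEquiv.injective key

end BiaffineAux

namespace BiaffineAux
open SimpleGraph Sum

lemma generic {A B : Type*} [Fintype A] [Fintype B] (q : ℕ) (hq : 2 ≤ q)
    (I : A → B → Prop) (dir : B → Fin q)
    (hcardB : Nat.card B = q ^ 2)
    (hppl : ∀ b, {a | I a b}.ncard = q)
    (hlpp : ∀ a, {b | I a b}.ncard = q)
    (hdir : ∀ b₁ b₂, dir b₁ = dir b₂ ↔ (b₁ = b₂ ∨ ∀ a, ¬ (I a b₁ ∧ I a b₂)))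
    (PS : Set A) (LS : Set B)
    (hres : IsResolvingSet (IncGraph I) (Sum.inl '' PS ∪ Sum.inr '' LS)) :
    q ^ 2 ≤ q * PS.ncard + LS.ncard + q := by
  classical
  have hqpos : 0 < q := by omega
  -- lines of different directions meet
  have hmeet : ∀ b₁ b₂, dir b₁ ≠ dir b₂ → ∃ a, I a b₁ ∧ I a b₂ := by
    intro b₁ b₂ hne
    by_contra hc
    push_neg at hc
    exact hne ((hdir b₁ b₂).mpr (Or.inr fun a h => hc a h.1 h.2))
  -- through each point there is a line of each direction
  have hthru : ∀ a (d : Fin q), ∃ b, I a b ∧ dir b = d := by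
    intro a d
    have hinj : Set.InjOn dir {b | I a b} := by
      intro b₁ h₁ b₂ h₂ hd
      rcases (hdir b₁ b₂).mp hd with h | h
      · exact h
      · exact absurd ⟨h₁, h₂⟩ (h a)
    have himg : (dir '' {b | I a b}).ncard = q := by
      rw [Set.ncard_image_of_injOn hinj, hlpp]
    have huniv : dir '' {b | I a b} = Set.univ := by
      apply Set.eq_of_subset_of_ncard_le (Set.subset_univ _)
      rw [himg, Set.ncard_univ, Nat.card_eq_fintype_card, Fintype.card_fin]
    have : d ∈ dir '' {b | I a b} := huniv ▸ Set.mem_univ d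
    obtain ⟨b, hb, hbd⟩ := this
    exact ⟨b, hb, hbd⟩
  -- non-incident point-line pairs are at distance 3
  have hd3 : ∀ a b, ¬ I a b → (IncGraph I).dist (inl a) (inr b) = 3 := by
    intro a b hnI
    have : Nontrivial (Fin q) := Fin.nontrivial_iff_two_le.mpr hq
    obtain ⟨d', hd'⟩ := exists_ne (dir b)
    obtain ⟨m, ham, hdm⟩ := hthru a d'
    obtain ⟨p', hp'm, hp'b⟩ := hmeet m b (by rw [hdm]; exact hd')
    exact dist_eq_three hnI ham hp'm hp'b
  -- parallel distinct lines are at distance 4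
  have hd4 : ∀ b₁ b₂, b₁ ≠ b₂ → dir b₁ = dir b₂ →
      (IncGraph I).dist (inr b₁) (inr b₂) = 4 := by
    intro b₁ b₂ hne hdd
    have hdisj : ∀ a, ¬ (I a b₁ ∧ I a b₂) := by
      rcases (hdir b₁ b₂).mp hdd with h | h
      · exact absurd h hne
      · exact h
    obtain ⟨p, hp⟩ : {a | I a b₁}.Nonempty :=
      Set.nonempty_of_ncard_ne_zero (by rw [hppl]; omega)
    have : Nontrivial (Fin q) := Fin.nontrivial_iff_two_le.mpr hq
    obtain ⟨d', hd'⟩ := exists_ne (dir b₁)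
    obtain ⟨m, hpm, hdm⟩ := hthru p d'
    obtain ⟨p', hp'm, hp'b₂⟩ := hmeet m b₂ (by rw [hdm, ← hdd]; exact hd')
    exact dist_eq_four hne hdisj hp hpm hp'm hp'b₂
  -- crossing distinct lines are at distance 2
  have hd2 : ∀ b₁ b₂, b₁ ≠ b₂ → dir b₁ ≠ dir b₂ →
      (IncGraph I).dist (inr b₁) (inr b₂) = 2 := by
    intro b₁ b₂ hne hdd
    obtain ⟨p, hp₁, hp₂⟩ := hmeet b₁ b₂ hdd
    exact dist_eq_two hne hp₁ hp₂
  -- the skew and outer-skew lines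
  set Skew : Set B := {b | ∀ a ∈ PS, ¬ I a b} with hSkew
  set Out : Set B := {b | b ∈ Skew ∧ b ∉ LS} with hOut
  -- direction is injective on outer skew lines
  have hinjOut : Set.InjOn dir Out := by
    intro b₁ h₁ b₂ h₂ hdd
    by_contra hne
    apply hne
    have := hres (inr b₁) (inr b₂) ?_
    · exact inr_injective this
    rintro s (⟨a, ha, rfl⟩ | ⟨m, hm, rfl⟩)
    · rw [SimpleGraph.dist_comm, hd3 a b₁ (h₁.1 a ha), SimpleGraph.dist_comm, hd3 a b₂ (h₂.1 a ha)]
    · have hm₁ : b₁ ≠ m := fun h => h₁.2 (h ▸ hm)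
      have hm₂ : b₂ ≠ m := fun h => h₂.2 (h ▸ hm)
      by_cases hdm : dir b₁ = dir m
      · rw [hd4 b₁ m hm₁ hdm, hd4 b₂ m hm₂ (hdd ▸ hdm)]
      · rw [hd2 b₁ m hm₁ hdm, hd2 b₂ m hm₂ (hdd ▸ hdm)]
  have hOutcard : Out.ncard ≤ q := by
    rw [← Set.ncard_image_of_injOn hinjOut]
    calc (dir '' Out).ncard ≤ (Set.univ : Set (Fin q)).ncard :=
          Set.ncard_le_ncard (Set.subset_univ _) Set.finite_univ
    _ = q := by rw [Set.ncard_univ, Nat.card_eq_fintype_card, Fintype.card_fin]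
  have hSkewcard : Skew.ncard ≤ q + LS.ncard := by
    have hsub : Skew ⊆ Out ∪ LS := by
      intro b hb
      by_cases hbl : b ∈ LS
      · exact Or.inr hbl
      · exact Or.inl ⟨hb, hbl⟩
    calc Skew.ncard ≤ (Out ∪ LS).ncard := Set.ncard_le_ncard hsub (Set.toFinite _)
    _ ≤ Out.ncard + LS.ncard := Set.ncard_union_le _ _
    _ ≤ q + LS.ncard := by omega
  -- blocked lines
  set Blocked : Set B := {b | ∃ a ∈ PS, I a b} with hBlocked
  have hBlockedcard : Blocked.ncard ≤ PS.ncard * q := by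
    have hsub : Blocked.toFinset ⊆ PS.toFinset.biUnion (fun a => {b | I a b}.toFinset) := by
      intro b hb
      rw [Set.mem_toFinset] at hb
      obtain ⟨a, ha, hab⟩ := hb
      rw [Finset.mem_biUnion]
      exact ⟨a, Set.mem_toFinset.mpr ha, Set.mem_toFinset.mpr hab⟩
    calc Blocked.ncard = Blocked.toFinset.card := Set.ncard_eq_toFinset_card' _
    _ ≤ (PS.toFinset.biUnion (fun a => {b | I a b}.toFinset)).card := Finset.card_le_card hsub
    _ ≤ ∑ a ∈ PS.toFinset, ({b | I a b}.toFinset).card := Finset.card_biUnion_le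
    _ = ∑ a ∈ PS.toFinset, q := by
        apply Finset.sum_congr rfl
        intro a _
        rw [← Set.ncard_eq_toFinset_card', hlpp]
    _ = PS.toFinset.card * q := by rw [Finset.sum_const, smul_eq_mul]
    _ = PS.ncard * q := by rw [← Set.ncard_eq_toFinset_card']
  -- every line is blocked or skew
  have hcover : q ^ 2 ≤ Blocked.ncard + Skew.ncard := by
    have huniv : (Set.univ : Set B) ⊆ Blocked ∪ Skew := by
      intro b _
      by_cases h : ∃ a ∈ PS, I a b
      · exact Or.inl h
      · push_neg at h
        exact Or.inr h
    calc q ^ 2 = (Set.univ : Set B).ncard := by rw [Set.ncard_univ, hcardB]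
    _ ≤ (Blocked ∪ Skew).ncard := Set.ncard_le_ncard huniv (Set.toFinite _)
    _ ≤ Blocked.ncard + Skew.ncard := Set.ncard_union_le _ _
  have := mul_comm PS.ncard q
  omega

end BiaffineAux
/-- If `S = P_S ∪ L_S` is a resolving set for a biaffine plane of order `q`, then
`|P_S| ≥ q - |S|/(q-1)` and `|L_S| ≥ q - |S|/(q-1)`. -/
theorem biaffine_resolving_lower_bounds {Pt Ln : Type*} [Fintype Pt] [Fintype Ln]
    (q : ℕ) (hq : 2 ≤ q) (I : Pt → Ln → Prop) (dir : Ln → Fin q) (cls : Pt → Fin q)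
    (hBA : IsBiaffinePlane q I dir cls)
    (PS : Set Pt) (LS : Set Ln)
    (hres : IsResolvingSet (IncGraph I) (Sum.inl '' PS ∪ Sum.inr '' LS)) :
    (PS.ncard : ℝ) ≥ q - (PS.ncard + LS.ncard) / (q - 1) ∧
    (LS.ncard : ℝ) ≥ q - (PS.ncard + LS.ncard) / (q - 1) := by
  obtain ⟨hcP, hcL, hppl, hlpp, _hint, hdir, hcls, _hex⟩ := hBA
  have h1 : q ^ 2 ≤ q * PS.ncard + LS.ncard + q :=
    BiaffineAux.generic q hq I dir hcL hppl hlpp hdir PS LS hres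
  have h2 : q ^ 2 ≤ q * LS.ncard + PS.ncard + q :=
    BiaffineAux.generic q hq (fun l p => I p l) cls hcP hlpp hppl hcls LS PS
      (BiaffineAux.resolving_swap hres)
  have hq1 : (2 : ℝ) ≤ (q : ℝ) := by exact_mod_cast hq
  have hpos : (0 : ℝ) < (q : ℝ) - 1 := by linarith
  have h1' : (q : ℝ) ^ 2 ≤ q * PS.ncard + LS.ncard + q := by exact_mod_cast h1
  have h2' : (q : ℝ) ^ 2 ≤ q * LS.ncard + PS.ncard + q := by exact_mod_cast h2
  constructor
  · have key : ((q : ℝ) - PS.ncard) * ((q : ℝ) - 1) ≤ (PS.ncard : ℝ) + LS.ncard := by nlinarith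
    have h3 : (q : ℝ) - PS.ncard ≤ ((PS.ncard : ℝ) + LS.ncard) / ((q : ℝ) - 1) :=
      (le_div_iff₀ hpos).mpr key
    rw [ge_iff_le]
    linarith
  · have key : ((q : ℝ) - LS.ncard) * ((q : ℝ) - 1) ≤ (PS.ncard : ℝ) + LS.ncard := by nlinarith
    have h3 : (q : ℝ) - LS.ncard ≤ ((PS.ncard : ℝ) + LS.ncard) / ((q : ℝ) - 1) :=
      (le_div_iff₀ hpos).mpr key
    rw [ge_iff_le]
    linarith
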